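/- arXiv:0812.0889 — 5 statements merged into one kernel-verified Lean document; each statement's English description precedes it below -/
import Mathlib

section
/- Let M be a Hilbert C*-module over a C*-algebra A satisfying condition [H]: every norm-bounded sequence (x_n) in M has a subsequence (x_{n_k}) and an element x_0 in M such that ⟨x_{n_k}, y⟩ converges in norm to ⟨x_0, y⟩ for every y in M. Then for every fixed y in M, the (anti-linear) map T_y : M → M defined by T_y(x) = ⟨y, x⟩·y is a compact operator, i.e., the image of every norm-bounded sequence under T_y has a norm-convergent subsequence. -/
open Filter Topology
open scoped RightActions

/-- The Hilbert C⋆-module class as Mathlib (December 2024) defined it: a *right* `A`-module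
(via `SMul Aᵐᵒᵖ E`) with an `A`-valued inner product linear in the second variable.
Mathlib's current `CStarModule` is a left module, so the old class is reproduced here. -/
class RightCStarModule (A E : Type*) [NonUnitalSemiring A] [StarRing A]
    [Module ℂ A] [AddCommGroup E] [Module ℂ E] [PartialOrder A] [SMul Aᵐᵒᵖ E] [Norm A] [Norm E]
    extends Inner A E where
  inner_add_right {x} {y} {z} : inner x (y + z) = inner x y + inner x z
  inner_self_nonneg {x} : 0 ≤ inner x x
  inner_self {x} : inner x x = 0 ↔ x = 0
  inner_op_smul_right {a : A} {x y : E} : inner x (y <• a) = inner x y * a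
  inner_smul_right_complex {z : ℂ} {x} {y} : inner x (z • y) = z • inner x y
  star_inner x y : star (inner x y) = inner y x
  norm_eq_sqrt_norm_inner_self x : ‖x‖ = √‖inner x x‖

lemma rcs_inner_sub_right {A E : Type*} [NonUnitalNormedRing A] [StarRing A] [CStarRing A]
    [PartialOrder A] [StarOrderedRing A] [NormedSpace ℂ A] [StarModule ℂ A]
    [NormedAddCommGroup E] [Module ℂ E] [SMul Aᵐᵒᵖ E] [RightCStarModule A E] (x y z : E) :
    inner A x (y - z) = inner A x y - inner A x z := by
  have h := RightCStarModule.inner_add_right (A := A) (x := x) (y := y - z) (z := z)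
  rw [sub_add_cancel] at h
  exact eq_sub_of_add_eq h.symm

lemma rcs_inner_sub_left {A E : Type*} [NonUnitalNormedRing A] [StarRing A] [CStarRing A]
    [PartialOrder A] [StarOrderedRing A] [NormedSpace ℂ A] [StarModule ℂ A]
    [NormedAddCommGroup E] [Module ℂ E] [SMul Aᵐᵒᵖ E] [RightCStarModule A E] (x y z : E) :
    inner A (x - y) z = inner A x z - inner A y z := by
  rw [← RightCStarModule.star_inner z, rcs_inner_sub_right, star_sub,
    RightCStarModule.star_inner, RightCStarModule.star_inner]

lemma rcs_inner_op_smul_left {A E : Type*} [NonUnitalNormedRing A] [StarRing A] [CStarRing A]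
    [PartialOrder A] [StarOrderedRing A] [NormedSpace ℂ A] [StarModule ℂ A]
    [NormedAddCommGroup E] [Module ℂ E] [SMul Aᵐᵒᵖ E] [RightCStarModule A E] (a : A) (x y : E) :
    inner A (x <• a) y = star a * inner A x y := by
  rw [← RightCStarModule.star_inner y, RightCStarModule.inner_op_smul_right, star_mul,
    RightCStarModule.star_inner]

lemma aux_inner_op_smul_sub {A E : Type*} [NonUnitalNormedRing A] [StarRing A] [CStarRing A]
    [PartialOrder A] [StarOrderedRing A] [NormedSpace ℂ A] [StarModule ℂ A]
    [NormedAddCommGroup E] [Module ℂ E] [SMul Aᵐᵒᵖ E] [RightCStarModule A E]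
    (y : E) (a b : A) : ‖y <• a - y <• b‖ ≤ ‖y‖ * ‖a - b‖ := by
  have hinner : inner A (y <• a - y <• b) (y <• a - y <• b)
      = star (a - b) * (inner A y y * (a - b)) := by
    simp only [rcs_inner_sub_right, rcs_inner_sub_left,
      RightCStarModule.inner_op_smul_right, rcs_inner_op_smul_left, star_sub,
      sub_mul, mul_sub]
    simp only [mul_assoc]
  have h1 : ‖y <• a - y <• b‖ ^ 2 ≤ (‖y‖ * ‖a - b‖) ^ 2 := by
    rw [RightCStarModule.norm_eq_sqrt_norm_inner_self (A := A), Real.sq_sqrt (norm_nonneg _), hinner]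
    calc ‖star (a - b) * (inner A y y * (a - b))‖
        ≤ ‖star (a - b)‖ * (‖inner A y y‖ * ‖a - b‖) :=
          (norm_mul_le _ _).trans (by gcongr; exact norm_mul_le _ _)
      _ = ‖inner A y y‖ * ‖a - b‖ ^ 2 := by rw [norm_star]; ring
      _ = (‖y‖ * ‖a - b‖) ^ 2 := by
          rw [RightCStarModule.norm_eq_sqrt_norm_inner_self (A := A) (x := y), mul_pow,
            Real.sq_sqrt (norm_nonneg _)]
  exact (pow_le_pow_iff_left₀ (norm_nonneg _) (by positivity) (by norm_num)).mp h1

/-- If a Hilbert C*-module `E` over a C*-algebra `A` satisfies condition [H]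
(every norm-bounded sequence has a subsequence whose inner products against every `y`
converge in norm to those of some `x₀`), then for every `y` the map
`T_y : x ↦ ⟪y, x⟫ • y` is a compact operator: the image of every norm-bounded sequence
has a norm-convergent subsequence. -/
theorem stmt0 {A E : Type*} [NonUnitalNormedRing A] [StarRing A] [CStarRing A]
    [PartialOrder A] [StarOrderedRing A] [NormedSpace ℂ A] [StarModule ℂ A]
    [NormedAddCommGroup E] [Module ℂ E] [SMul Aᵐᵒᵖ E] [RightCStarModule A E] [CompleteSpace E]
    (hH : ∀ x : ℕ → E, (∃ C : ℝ, ∀ n, ‖x n‖ ≤ C) →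
      ∃ φ : ℕ → ℕ, StrictMono φ ∧ ∃ x₀ : E, ∀ y : E,
        Tendsto (fun k => ‖(inner A (x (φ k)) y : A) - inner A x₀ y‖) atTop (𝓝 0))
    (y : E) (x : ℕ → E) (hx : ∃ C : ℝ, ∀ n, ‖x n‖ ≤ C) :
    ∃ φ : ℕ → ℕ, StrictMono φ ∧ ∃ L : E,
      Tendsto (fun k => y <• (inner A y (x (φ k)) : A)) atTop (𝓝 L) := by
  obtain ⟨φ, hφ, x₀, hconv⟩ := hH x hx
  refine ⟨φ, hφ, y <• inner A y x₀, ?_⟩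
  rw [tendsto_iff_norm_sub_tendsto_zero]
  refine squeeze_zero (fun k => norm_nonneg _) (fun k => aux_inner_op_smul_sub y _ _) ?_
  have key : ∀ k, ‖inner A y (x (φ k)) - inner A y x₀‖
      = ‖inner A (x (φ k)) y - inner A x₀ y‖ := fun k => by
    rw [← RightCStarModule.star_inner (x (φ k)), ← RightCStarModule.star_inner x₀, ← star_sub, norm_star]
  have := (hconv y).const_mul ‖y‖
  simpa [key, mul_comm] using this
end

section
/- Let H be a separable infinite-dimensional Hilbert space with orthonormal basis (ε_n), and regard the compact operators K(H) as a Hilbert C*-module over itself with inner product ⟨a, b⟩ = a b*. Let p_n denote the orthogonal projection onto span{ε_1, ..., ε_n}. Then there is no subsequence (p_{n_k}) and no compact operator a ∈ K(H) such that ‖p_{n_k} y* − a y*‖ → 0 for all y ∈ K(H). In particular, K(H) as a Hilbert C*-module over itself does not satisfy condition [H]. -/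
open Filter Topology

/-- The rank-one operator `e_{ξ,η} : ν ↦ (ν|η)ξ` on a Hilbert space. -/
noncomputable def rankOne {H : Type*} [NormedAddCommGroup H] [InnerProductSpace ℂ H]
    (ξ η : H) : H →L[ℂ] H :=
  (innerSL ℂ η).smulRight ξ

section aux
variable {H : Type*} [NormedAddCommGroup H] [InnerProductSpace ℂ H]

lemma rankOne_apply (ξ η ν : H) : rankOne ξ η ν = (inner ℂ η ν : ℂ) • ξ := rfl

lemma rankOne_compact (ξ η : H) : IsCompactOperator (rankOne ξ η) := by
  refine ⟨(fun c : ℂ => c • ξ) '' Metric.closedBall 0 ‖η‖,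
    ((isCompact_closedBall 0 ‖η‖).image (by continuity)), ?_⟩
  filter_upwards [Metric.closedBall_mem_nhds (0:H) one_pos] with ν hν
  refine ⟨inner ℂ η ν, ?_, rfl⟩
  simp only [Metric.mem_closedBall, dist_zero_right]
  calc ‖(inner ℂ η ν : ℂ)‖ ≤ ‖η‖ * ‖ν‖ := norm_inner_le_norm η ν
    _ ≤ ‖η‖ * 1 := mul_le_mul_of_nonneg_left (by simpa using hν) (norm_nonneg η)
    _ = ‖η‖ := mul_one _

lemma rankOne_adjoint [CompleteSpace H] (ξ η : H) :
    ContinuousLinearMap.adjoint (rankOne ξ η) = rankOne η ξ := by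
  symm
  rw [ContinuousLinearMap.eq_adjoint_iff]
  intro x y
  simp [rankOne_apply, inner_smul_left, inner_smul_right, mul_comm, ← inner_conj_symm y η]

end aux


/-- Let `H` be a separable infinite-dimensional Hilbert space with
orthonormal basis `(ε_n)`, and regard `K(H)` as a Hilbert C*-module over itself with
`⟪a, b⟫ = a b*`. With `p_n` the orthogonal projection onto `span{ε_1, …, ε_n}`, there is
no subsequence `(p_{n_k})` and no compact operator `a` with `‖p_{n_k} y* − a y*‖ → 0` for
all compact `y`; in particular `K(H)` as a module over itself fails condition [H]. -/
theorem stmt1 {H : Type*} [NormedAddCommGroup H] [InnerProductSpace ℂ H] [CompleteSpace H]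
    (ε : HilbertBasis ℕ ℂ H)
    (p : ℕ → H →L[ℂ] H) (hp : ∀ n, p n = ∑ i ∈ Finset.range n, rankOne (ε i) (ε i)) :
    ¬ ∃ φ : ℕ → ℕ, StrictMono φ ∧ ∃ a : H →L[ℂ] H, IsCompactOperator a ∧
      ∀ y : H →L[ℂ] H, IsCompactOperator y →
        Tendsto
          (fun k => ‖p (φ k) ∘L ContinuousLinearMap.adjoint y
            - a ∘L ContinuousLinearMap.adjoint y‖) atTop (𝓝 0) := by
  rintro ⟨φ, hφ, a, ha, hconv⟩
  have horth := ε.orthonormal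
  have hin : ∀ i j, (inner ℂ (ε i) (ε j) : ℂ) = if i = j then 1 else 0 :=
    orthonormal_iff_ite.mp horth
  -- p n (ε i) = ε i when i < n
  have hpε : ∀ n i, i < n → p n (ε i) = ε i := by
    intro n i hlt
    rw [hp]
    rw [ContinuousLinearMap.sum_apply]
    have : ∀ j ∈ Finset.range n, rankOne (ε j) (ε j) (ε i)
        = if j = i then ε i else 0 := by
      intro j _
      rw [rankOne_apply, hin j i]
      split <;> simp_all
    rw [Finset.sum_congr rfl this, Finset.sum_ite_eq' (Finset.range n) i (fun _ => ε i)]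
    simp [hlt]
  -- a fixes each ε i
  have hfix : ∀ i, a (ε i) = ε i := by
    intro i
    set y := rankOne (ε i) (ε i) with hy
    have hyadj : ContinuousLinearMap.adjoint y = y := rankOne_adjoint (ε i) (ε i)
    have h := hconv y (rankOne_compact _ _)
    rw [hyadj] at h
    have hev : ∀ᶠ k in atTop, ‖p (φ k) ∘L y - a ∘L y‖ = ‖y - a ∘L y‖ := by
      filter_upwards [eventually_ge_atTop (i + 1)] with k hk
      have hik : i < φ k := lt_of_lt_of_le hk (hφ.le_apply)
      congr 2
      ext ν
      simp only [ContinuousLinearMap.comp_apply, hy, rankOne_apply, map_smul,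
        hpε (φ k) i hik]
    have : Tendsto (fun _ : ℕ => ‖y - a ∘L y‖) atTop (𝓝 0) := h.congr' hev
    have h0 : ‖y - a ∘L y‖ = 0 := tendsto_nhds_unique tendsto_const_nhds this
    have hya : y = a ∘L y := sub_eq_zero.mp (norm_eq_zero.mp h0)
    have hyε : y (ε i) = ε i := by
      rw [hy, rankOne_apply, hin i i]; simp
    calc a (ε i) = (a ∘L y) (ε i) := by rw [ContinuousLinearMap.comp_apply, hyε]
      _ = y (ε i) := by rw [← hya]
      _ = ε i := hyε
  -- compactness contradiction
  obtain ⟨K, hK, hmem⟩ := ha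
  obtain ⟨r, hr, hball⟩ := Metric.mem_nhds_iff.mp hmem
  set u : ℕ → H := fun i => ((r/2 : ℝ)) • ε i with hu
  have huK : ∀ i, a (u i) ∈ K := by
    intro i
    apply hball
    simp only [Metric.mem_ball, dist_zero_right, hu, norm_smul, horth.1 i]
    rw [mul_one]
    calc ‖(r/2 : ℝ)‖ = r/2 := abs_of_pos (by linarith)
      _ < r := by linarith
  have huK' : ∀ i, u i ∈ K := by
    intro i
    have : a (u i) = u i := by simp [hu, map_smul, hfix i]
    rw [← this]; exact huK i
  obtain ⟨x, _, ψ, hψ, hlim⟩ := hK.tendsto_subseq huK'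
  have hcauchy := hlim.cauchySeq
  obtain ⟨N, hN⟩ := Metric.cauchySeq_iff'.mp hcauchy (r/2) (by linarith)
  have hdist : dist (u (ψ (N+1))) (u (ψ N)) < r/2 := hN (N+1) (Nat.le_succ N)
  have hne : ψ (N+1) ≠ ψ N := (hψ (Nat.lt_succ_self N)).ne'
  have : dist (u (ψ (N+1))) (u (ψ N)) ≥ r/2 := by
    rw [dist_eq_norm, hu]
    simp only [← smul_sub, norm_smul]
    have h2 : ‖ε (ψ (N+1)) - ε (ψ N)‖ ^ 2 = 2 := by
      rw [@norm_sub_sq ℂ, hin _ _]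
      simp [hne, horth.1]
      norm_num
    have h1 : (1:ℝ) ≤ ‖ε (ψ (N+1)) - ε (ψ N)‖ := by
      nlinarith [norm_nonneg (ε (ψ (N+1)) - ε (ψ N))]
    calc r/2 = ‖(r/2 : ℝ)‖ * 1 := by
          rw [Real.norm_eq_abs, abs_of_pos (by linarith), mul_one]
      _ ≤ ‖(r/2 : ℝ)‖ * ‖ε (ψ (N+1)) - ε (ψ N)‖ :=
          mul_le_mul_of_nonneg_left h1 (norm_nonneg _)
  linarith
end

section
/- Let H be a separable infinite-dimensional Hilbert space regarded as a left Hilbert K(H)-module with inner product ⟨ξ, η⟩ = e_{ξ,η}. Let (ε_n) be an orthonormal basis of H. Then there is no subsequence (ε_{n_k}) and no vector ε_0 ∈ H such that ‖e_{ε_{n_k}, ξ} − e_{ε_0, ξ}‖ → 0 for all ξ ∈ H. In particular, H as a Hilbert K(H)-module does not satisfy condition [H]. -/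
open Filter Topology

/-- Let `H` be a separable infinite-dimensional Hilbert space, viewed as a
left Hilbert `K(H)`-module with inner product `⟪ξ, η⟫ = e_{ξ,η}`, and let `(ε_n)` be an
orthonormal basis of `H`. Then there is no subsequence `(ε_{n_k})` and no `ε₀ ∈ H` with
`‖e_{ε_{n_k}, ξ} − e_{ε₀, ξ}‖ → 0` for all `ξ ∈ H`; in particular `H` as a Hilbert
`K(H)`-module does not satisfy condition [H]. -/
theorem stmt6 {H : Type*} [NormedAddCommGroup H] [InnerProductSpace ℂ H] [CompleteSpace H]
    (ε : HilbertBasis ℕ ℂ H) :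
    ¬ ∃ φ : ℕ → ℕ, StrictMono φ ∧ ∃ ε₀ : H, ∀ ξ : H,
      Tendsto (fun k => ‖rankOne (ε (φ k)) ξ - rankOne ε₀ ξ‖) atTop (𝓝 0) := by
  rintro ⟨φ, hφ, ε₀, h⟩
  have h0 := h (ε 0)
  have hnorm : ∀ k, ‖rankOne (ε (φ k)) (ε 0) - rankOne ε₀ (ε 0)‖ = ‖ε (φ k) - ε₀‖ := by
    intro k
    have he : rankOne (ε (φ k)) (ε 0) - rankOne ε₀ (ε 0)
        = (innerSL ℂ (ε 0)).smulRight (ε (φ k) - ε₀) := by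
      ext ν; simp [rankOne, smul_sub]
    rw [he, ContinuousLinearMap.norm_smulRight_apply, innerSL_apply_norm,
      ε.orthonormal.1 0, one_mul]
  simp_rw [hnorm] at h0
  -- so ε (φ k) → ε₀ in norm, hence eventually within 1/2 of ε₀
  have hev : ∀ᶠ k in atTop, ‖ε (φ k) - ε₀‖ < 1/2 :=
    h0.eventually_lt_const (by norm_num)
  obtain ⟨N, hN⟩ := eventually_atTop.mp hev
  have h1 : ‖ε (φ N) - ε (φ (N + 1))‖ ≤ ‖ε (φ N) - ε₀‖ + ‖ε (φ (N + 1)) - ε₀‖ := by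
    have := norm_sub_le (ε (φ N) - ε₀) (ε (φ (N + 1)) - ε₀)
    simpa using this
  have hlt : ‖ε (φ N) - ε (φ (N + 1))‖ < 1 := by
    have a := hN N le_rfl
    have b := hN (N + 1) (Nat.le_succ N)
    linarith
  -- but the distance between distinct orthonormal vectors squares to 2
  have hne : φ N ≠ φ (N + 1) := (hφ (Nat.lt_succ_self N)).ne
  have hsq : ‖ε (φ N) - ε (φ (N + 1))‖ ^ 2 = 2 := by
    rw [@norm_sub_sq ℂ, ε.orthonormal.2 hne, ε.orthonormal.1, ε.orthonormal.1]
    norm_num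
  nlinarith [norm_nonneg (ε (φ N) - ε (φ (N + 1)))]
end

section
/- Let H = ⊕_{n=1}^∞ H_n be a Hilbert space direct sum with unit vectors ε_n ∈ H_n, and let M'' = ⊕_{n=1}^∞ H_n (the Hilbert C*-module direct sum of the K(H_n)-modules H_n, i.e., sequences (ξ_n) with ξ_n ∈ H_n such that Σ e_{ξ_n,ξ_n} converges in K(H)). Set x_n = (ε_1, ..., ε_n, 0, 0, ...). Then there is no subsequence (x_{n_k}) and no x_0 = (ξ_1, ξ_2, ...) ∈ M'' such that ⟨x_{n_k}, y⟩ → ⟨x_0, y⟩ in operator norm for all y ∈ M''. Indeed, such convergence would force ξ_n = ε_n for all n, but the sequence (ε_1, ε_2, ...) does not define an element of M''. -/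
open Filter Topology

lemma rankOne_sub_left {H : Type*} [NormedAddCommGroup H] [InnerProductSpace ℂ H]
    (a c b : H) : rankOne a b - rankOne c b = rankOne (a - c) b := by
  ext v; simp [rankOne, smul_sub]

lemma rankOne_zero_right {H : Type*} [NormedAddCommGroup H] [InnerProductSpace ℂ H]
    (a : H) : rankOne a (0 : H) = 0 := by
  ext v; simp [rankOne]

lemma norm_rankOne {H : Type*} [NormedAddCommGroup H] [InnerProductSpace ℂ H]
    (a b : H) : ‖rankOne a b‖ = ‖b‖ * ‖a‖ := by
  rw [rankOne, ContinuousLinearMap.norm_smulRight_apply, innerSL_apply_norm]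

/-- Let `H = ⊕_n H_n` with unit vectors `ε_n ∈ H_n` (each `H_n`
finite-dimensional), and let `M''` be the Hilbert C*-module direct sum of the
`K(H_n)`-modules `H_n`: its elements are sequences `(ξ_n)`, `ξ_n ∈ H_n`, whose inner
product `⟪(ξ_n), (η_n)⟫ = Σ_n e_{ξ_n,η_n}` is a compact (block-diagonal) operator,
equivalently `‖ξ_n‖ → 0`; the operator norm of a block-diagonal operator is the
supremum of the block norms. With `x_N = (ε_1, …, ε_N, 0, 0, …)`, there is no
subsequence `(x_{N_k})` and no `x₀ = (ξ_n) ∈ M''` such that `⟪x_{N_k}, y⟫ → ⟪x₀, y⟫`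
in operator norm for every `y ∈ M''`. -/
theorem stmt9 {G : ℕ → Type*} [∀ n, NormedAddCommGroup (G n)]
    [∀ n, InnerProductSpace ℂ (G n)] [∀ n, FiniteDimensional ℂ (G n)]
    (ε : ∀ n, G n) (hε : ∀ n, ‖ε n‖ = 1)
    (X : ℕ → ∀ n, G n) (hX : ∀ N n, X N n = if n < N then ε n else 0) :
    ¬ ∃ φ : ℕ → ℕ, StrictMono φ ∧ ∃ ξ : ∀ n, G n,
        Tendsto (fun n => ‖ξ n‖) atTop (𝓝 0) ∧
        ∀ y : ∀ n, G n, Tendsto (fun n => ‖y n‖) atTop (𝓝 0) →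
          Tendsto (fun k => ⨆ n, ‖rankOne (X (φ k) n) (y n) - rankOne (ξ n) (y n)‖)
            atTop (𝓝 0) := by
  rintro ⟨φ, hφ, ξ, hξ0, hconv⟩
  have key : ∀ m, ξ m = ε m := by
    intro m
    set y : ∀ n, G n := fun n => if n = m then ε n else 0 with hy
    have hy0 : Tendsto (fun n => ‖y n‖) atTop (𝓝 0) := by
      refine tendsto_const_nhds.congr' ?_
      filter_upwards [eventually_gt_atTop m] with n hn
      simp [hy, Nat.ne_of_gt hn]
    have h := hconv y hy0
    have hsup : ∀ k, m < φ k →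
        (⨆ n, ‖rankOne (X (φ k) n) (y n) - rankOne (ξ n) (y n)‖) = ‖ε m - ξ m‖ := by
      intro k hk
      have hval : ∀ n, ‖rankOne (X (φ k) n) (y n) - rankOne (ξ n) (y n)‖ =
          if n = m then ‖ε m - ξ m‖ else 0 := by
        intro n
        by_cases hn : n = m
        · subst hn
          simp only [hy, if_pos rfl, hX, if_pos hk, rankOne_sub_left, norm_rankOne,
            hε, one_mul, if_true]
        · rw [hy]
          simp only [if_neg hn, rankOne_zero_right, sub_zero, norm_zero]
      apply le_antisymm
      · apply ciSup_le
        intro n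
        refine le_trans (le_of_eq (hval n)) ?_
        split
        · exact le_refl _
        · positivity
      · have hb : BddAbove (Set.range fun n =>
            ‖rankOne (X (φ k) n) (y n) - rankOne (ξ n) (y n)‖) := by
          refine ⟨‖ε m - ξ m‖, ?_⟩
          rintro _ ⟨n, rfl⟩
          refine le_trans (le_of_eq (hval n)) ?_
          split
          · exact le_refl _
          · positivity
        calc ‖ε m - ξ m‖ = ‖rankOne (X (φ k) m) (y m) - rankOne (ξ m) (y m)‖ :=
              (by rw [hval m, if_pos rfl])
          _ ≤ _ := le_ciSup hb m
    have hev : ∀ᶠ k in atTop,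
        (⨆ n, ‖rankOne (X (φ k) n) (y n) - rankOne (ξ n) (y n)‖) = ‖ε m - ξ m‖ := by
      filter_upwards [eventually_gt_atTop m] with k hk
      exact hsup k (lt_of_lt_of_le hk (hφ.le_apply))
    have : Tendsto (fun _ : ℕ => ‖ε m - ξ m‖) atTop (𝓝 (0 : ℝ)) :=
      Tendsto.congr' hev h
    have h0 : ‖ε m - ξ m‖ = 0 := tendsto_nhds_unique tendsto_const_nhds this
    have := norm_eq_zero.mp h0
    rw [sub_eq_zero] at this
    exact this.symm
  have : Tendsto (fun _ : ℕ => (1 : ℝ)) atTop (𝓝 0) := by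
    apply hξ0.congr
    intro n; rw [key n, hε n]
  exact one_ne_zero (tendsto_nhds_unique tendsto_const_nhds this)
end

section
/- Let A be the C*-algebra c_0 of complex sequences converging to 0 (with sup norm and pointwise operations), viewed as a Hilbert C*-module over itself via ⟨a, b⟩ = a·conj(b). Then A satisfies condition [H']: for each norm-bounded sequence (x_n) in A and each y ∈ A, there is a subsequence (x_{n_k}) such that (⟨x_{n_k}, y⟩) converges in norm. However, A does not satisfy condition [H]: there exists a norm-bounded sequence (x_n) in A such that no subsequence (x_{n_k}) and no x_0 ∈ A satisfy ⟨x_{n_k}, y⟩ → ⟨x_0, y⟩ for all y ∈ A. -/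
open Filter Topology
open scoped ZeroAtInfty

namespace Stmt11Aux

/-- On `ℕ`, the cocompact filter equals `atTop`. -/
lemma nat_cocompact : Filter.cocompact ℕ = atTop := by
  rw [cocompact_eq_cofinite, Nat.cofinite_eq_atTop]

/-- Build an element of `C₀(ℕ, ℂ)` from a function tending to zero. -/
def mkC0 (f : ℕ → ℂ) (hf : Tendsto f atTop (𝓝 0)) : C₀(ℕ, ℂ) :=
  { toFun := f
    continuous_toFun := continuous_of_discreteTopology
    zero_at_infty' := by rw [nat_cocompact]; exact hf }

@[simp] lemma mkC0_apply (f : ℕ → ℂ) (hf) (m : ℕ) : mkC0 f hf m = f m := rfl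

lemma norm_apply_le (f : C₀(ℕ, ℂ)) (m : ℕ) : ‖f m‖ ≤ ‖f‖ := by
  rw [← ZeroAtInftyContinuousMap.norm_toBCF_eq_norm]
  exact f.toBCF.norm_coe_le_norm m

lemma norm_le_of (f : C₀(ℕ, ℂ)) {c : ℝ} (hc : 0 ≤ c) (h : ∀ m, ‖f m‖ ≤ c) : ‖f‖ ≤ c := by
  rw [← ZeroAtInftyContinuousMap.norm_toBCF_eq_norm]
  exact (BoundedContinuousFunction.norm_le hc).2 h

lemma continuous_eval (m : ℕ) : Continuous fun f : C₀(ℕ, ℂ) => f m :=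
  (continuous_eval_const (F := BoundedContinuousFunction ℕ ℂ) m).comp
    ZeroAtInftyContinuousMap.isometry_toBCF.continuous

end Stmt11Aux

open Stmt11Aux

/-- The C*-algebra `c₀ = C₀(ℕ, ℂ)` of complex null sequences, viewed as a
Hilbert C*-module over itself via `⟪a, b⟫ = a·conj b = a * star b`, satisfies condition
[H']: for each norm-bounded sequence `(x_n)` and each `y`, some subsequence of
`(⟪x_{n_k}, y⟫)` converges in norm. However it does not satisfy condition [H]: there is
a norm-bounded sequence `(x_n)` such that no subsequence `(x_{n_k})` and no `x₀` satisfy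
`⟪x_{n_k}, y⟫ → ⟪x₀, y⟫` for all `y`. -/
theorem stmt11 :
    (∀ x : ℕ → C₀(ℕ, ℂ), (∃ C : ℝ, ∀ n, ‖x n‖ ≤ C) → ∀ y : C₀(ℕ, ℂ),
      ∃ φ : ℕ → ℕ, StrictMono φ ∧ ∃ L : C₀(ℕ, ℂ),
        Tendsto (fun k => x (φ k) * star y) atTop (𝓝 L)) ∧
    (∃ x : ℕ → C₀(ℕ, ℂ), (∃ C : ℝ, ∀ n, ‖x n‖ ≤ C) ∧
      ∀ φ : ℕ → ℕ, StrictMono φ → ∀ x₀ : C₀(ℕ, ℂ),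
        ¬ ∀ y : C₀(ℕ, ℂ),
          Tendsto (fun k => x (φ k) * star y) atTop (𝓝 (x₀ * star y))) := by
  constructor
  · -- condition [H']
    rintro x ⟨C, hC⟩ y
    set C' : ℝ := max C 0 with hC'def
    have hC'0 : 0 ≤ C' := le_max_right _ _
    have hxb : ∀ n m, ‖x n m‖ ≤ C' := fun n m =>
      (norm_apply_le (x n) m).trans ((hC n).trans (le_max_left _ _))
    -- compactness in the product space
    have hcpt : IsCompact (Set.univ.pi fun _ : ℕ => Metric.closedBall (0 : ℂ) C') :=
      isCompact_univ_pi fun _ => isCompact_closedBall 0 C'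
    obtain ⟨a, ha, φ, hφ, hconv⟩ :=
      hcpt.tendsto_subseq (x := fun n => (fun m => x n m : ℕ → ℂ))
        (fun n => by
          intro m _
          simpa [Metric.mem_closedBall, dist_zero_right] using hxb n m)
    have hconv' : ∀ m, Tendsto (fun k => x (φ k) m) atTop (𝓝 (a m)) := by
      intro m
      exact (tendsto_pi_nhds.1 hconv) m
    have haC : ∀ m, ‖a m‖ ≤ C' := by
      intro m
      have := ha m (Set.mem_univ m)
      simpa [Metric.mem_closedBall, dist_zero_right] using this
    -- the limit
    have hy0 : Tendsto (fun m => y m) atTop (𝓝 0) := by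
      have := y.zero_at_infty'
      rwa [nat_cocompact] at this
    have hL0 : Tendsto (fun m => a m * star (y m)) atTop (𝓝 0) := by
      have hg : Tendsto (fun m => C' * ‖y m‖) atTop (𝓝 0) := by
        have := (hy0.norm).const_mul C'
        simpa using this
      refine squeeze_zero_norm (fun m => ?_) hg
      rw [norm_mul, norm_star]
      exact mul_le_mul_of_nonneg_right (haC m) (norm_nonneg _)
    refine ⟨φ, hφ, mkC0 (fun m => a m * star (y m)) hL0, ?_⟩
    rw [Metric.tendsto_atTop]
    intro ε hε
    -- tail bound on y
    have hδ : (0:ℝ) < ε / (2 * (2 * C' + 1)) := by positivity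
    obtain ⟨N, hN⟩ := (Metric.tendsto_atTop.1 hy0) _ hδ
    -- head bound from pointwise convergence
    have hδ' : (0:ℝ) < ε / (2 * (‖y‖ + 1)) := by positivity
    have hhead : ∀ᶠ k in atTop, ∀ m ∈ Finset.range N, ‖x (φ k) m - a m‖ ≤ ε / (2 * (‖y‖ + 1)) := by
      rw [Filter.eventually_all_finset]
      intro m _
      obtain ⟨K, hK⟩ := (Metric.tendsto_atTop.1 (hconv' m)) _ hδ'
      exact eventually_atTop.2 ⟨K, fun k hk => by
        have := hK k hk
        rw [dist_eq_norm] at this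
        exact this.le⟩
    obtain ⟨K, hK⟩ := eventually_atTop.1 hhead
    refine ⟨K, fun k hk => ?_⟩
    rw [dist_eq_norm]
    have key : ∀ m, ‖(x (φ k) * star y - mkC0 (fun m => a m * star (y m)) hL0) m‖ ≤ ε / 2 := by
      intro m
      have heval : (x (φ k) * star y - mkC0 (fun m => a m * star (y m)) hL0) m
          = (x (φ k) m - a m) * star (y m) := by
        simp [ZeroAtInftyContinuousMap.mul_apply, ZeroAtInftyContinuousMap.star_apply,
          sub_mul]
      rw [heval, norm_mul, norm_star]
      by_cases hm : m < N
      · -- head : x (φ k) m close to a m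
        have h1 : ‖x (φ k) m - a m‖ ≤ ε / (2 * (‖y‖ + 1)) :=
          hK k hk m (Finset.mem_range.2 hm)
        have h2 : ‖y m‖ ≤ ‖y‖ := norm_apply_le y m
        have hy1 : (0:ℝ) ≤ ‖y‖ := norm_nonneg _
        have := mul_le_mul h1 h2 (norm_nonneg _) hδ'.le
        refine this.trans ?_
        rw [div_mul_eq_mul_div, div_le_div_iff₀ (by positivity) (by norm_num)]
        nlinarith [hε.le]
      · -- tail : y m small
        push_neg at hm
        have h1 : ‖x (φ k) m - a m‖ ≤ 2 * C' := by
          calc ‖x (φ k) m - a m‖ ≤ ‖x (φ k) m‖ + ‖a m‖ := norm_sub_le _ _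
            _ ≤ C' + C' := add_le_add (hxb _ _) (haC _)
            _ = 2 * C' := by ring
        have h2 : ‖y m‖ ≤ ε / (2 * (2 * C' + 1)) := by
          have := hN m hm
          rw [dist_zero_right] at this
          exact this.le
        have := mul_le_mul h1 h2 (norm_nonneg _) (by positivity)
        refine this.trans ?_
        rw [mul_div_assoc', div_le_div_iff₀ (by positivity) (by norm_num)]
        nlinarith [hε.le, hC'0]
    calc ‖x (φ k) * star y - mkC0 (fun m => a m * star (y m)) hL0‖
        ≤ ε / 2 := norm_le_of _ (by positivity) key
      _ < ε := by linarith
  · -- condition [H] fails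
    -- x n = indicator of {0, ..., n-1}
    have hx0 : ∀ n : ℕ, Tendsto (fun m => if m < n then (1:ℂ) else 0) atTop (𝓝 0) := by
      intro n
      refine Tendsto.congr' ?_ tendsto_const_nhds
      filter_upwards [eventually_ge_atTop n] with m hm
      simp [Nat.not_lt.2 hm]
    refine ⟨fun n => mkC0 (fun m => if m < n then (1:ℂ) else 0) (hx0 n), ⟨1, fun n => ?_⟩, ?_⟩
    · apply norm_le_of _ zero_le_one
      intro m
      by_cases h : m < n <;> simp [h]
    · intro φ hφ x₀ h
      -- test against the point mass at m : conclude x₀ m = 1 for all m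
      have hx₀ : ∀ m : ℕ, x₀ m = 1 := by
        intro m
        have hδ0 : Tendsto (fun m' => if m' = m then (1:ℂ) else 0) atTop (𝓝 0) := by
          refine Tendsto.congr' ?_ tendsto_const_nhds
          filter_upwards [eventually_ge_atTop (m+1)] with m' hm'
          have : m' ≠ m := by omega
          simp [this]
        set y : C₀(ℕ, ℂ) := mkC0 (fun m' => if m' = m then (1:ℂ) else 0) hδ0 with hy
        have hev := ((continuous_eval m).tendsto _).comp (h y)
        have hys : (star y) m = 1 := by simp [hy, ZeroAtInftyContinuousMap.star_apply, mkC0_apply]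
        have hlhs : (fun k => (mkC0 (fun m' => if m' < φ k then (1:ℂ) else 0) (hx0 (φ k))
            * star y) m) =ᶠ[atTop] fun _ => (1:ℂ) := by
          filter_upwards [eventually_ge_atTop (m+1)] with k hk
          have hmk : m < φ k := lt_of_lt_of_le (Nat.lt_of_lt_of_le (Nat.lt_succ_self m) hk)
            (hφ.le_apply)
          simp [ZeroAtInftyContinuousMap.mul_apply, hys, hmk]
        have h1 : Tendsto (fun _ : ℕ => (1:ℂ)) atTop (𝓝 ((x₀ * star y) m)) := by
          refine Tendsto.congr' ?_ hev
          filter_upwards [hlhs] with k hk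
          simpa using hk
        have := tendsto_nhds_unique h1 tendsto_const_nhds
        rw [ZeroAtInftyContinuousMap.mul_apply, hys, mul_one] at this
        exact this
      -- contradiction with x₀ ∈ c₀
      have hx₀0 : Tendsto (fun m => x₀ m) atTop (𝓝 0) := by
        have := x₀.zero_at_infty'
        rwa [nat_cocompact] at this
      rw [show (fun m => x₀ m) = fun _ => (1:ℂ) from funext hx₀] at hx₀0
      exact one_ne_zero (tendsto_nhds_unique tendsto_const_nhds hx₀0)
end
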